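/- Let 𝒪 be a Dedekind domain which is not a field, with fraction field K. For each nonzero prime ideal 𝔭 of 𝒪, let 𝒪ᵖ^ denote the 𝔭-adic completion of 𝒪. Then the commutative square of 𝒪-modules with top-left corner 𝒪, top-right corner ∏_𝔭 𝒪ᵖ^ (the product over all nonzero prime ideals, with top map the product of the completion maps), bottom-left corner K (with left map the inclusion 𝒪 → K), and bottom-right corner K ⊗_𝒪 (∏_𝔭 𝒪ᵖ^) (with right map x ↦ 1 ⊗ x and bottom map q ↦ q ⊗ 1), is a pullback square. Equivalently, the sequence 0 → 𝒪 → K ⊕ ∏_𝔭 𝒪ᵖ^ → K ⊗_𝒪 (∏_𝔭 𝒪ᵖ^) is exact, where the first map is (inclusion, completion maps) and the second map sends (q, x) to q ⊗ 1 − 1 ⊗ x. -/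

import Mathlib

open scoped TensorProduct

/-- The product, over all nonzero prime ideals `𝔭` of `𝒪`, of the `𝔭`-adic completions of `𝒪`. -/
abbrev ProdAdicCompletions' (O : Type*) [CommRing O] : Type _ :=
  Π 𝔭 : {𝔭 : Ideal O // 𝔭 ≠ ⊥ ∧ 𝔭.IsPrime}, AdicCompletion 𝔭.1 O

/-- The map `𝒪 → K ⊕ ∏_𝔭 𝒪ᵖ^` given by the inclusion into the fraction field together with the
completion maps. -/
noncomputable def fractureFirstMap (O : Type*) [CommRing O] [IsDomain O] :
    O →ₗ[O] FractionRing O × ProdAdicCompletions' O :=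
  (Algebra.linearMap O (FractionRing O)).prod
    (LinearMap.pi fun 𝔭 : {𝔭 : Ideal O // 𝔭 ≠ ⊥ ∧ 𝔭.IsPrime} => AdicCompletion.of 𝔭.1 O)

/-- The map `K ⊕ ∏_𝔭 𝒪ᵖ^ → K ⊗_𝒪 ∏_𝔭 𝒪ᵖ^`, `(q, x) ↦ q ⊗ 1 − 1 ⊗ x`. -/
noncomputable def fractureSecondMap (O : Type*) [CommRing O] [IsDomain O] :
    FractionRing O × ProdAdicCompletions' O →ₗ[O]
      FractionRing O ⊗[O] ProdAdicCompletions' O :=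
  (((TensorProduct.mk O (FractionRing O) (ProdAdicCompletions' O)).flip 1).comp
      (LinearMap.fst O (FractionRing O) (ProdAdicCompletions' O))) -
    ((TensorProduct.mk O (FractionRing O) (ProdAdicCompletions' O) 1).comp
      (LinearMap.snd O (FractionRing O) (ProdAdicCompletions' O)))


open IsDedekindDomain IsDedekindDomain.HeightOneSpectrum


section Aux

variable {O : Type*} [CommRing O] [IsDomain O] [IsDedekindDomain O]

lemma aux_smul_top_eq (I : Ideal O) (n : ℕ) : (I ^ n • ⊤ : Submodule O O) = I ^ n := by
  rw [Ideal.smul_eq_mul, Ideal.mul_top]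

lemma aux_mem_pow_iff (v : HeightOneSpectrum O) (r : O) (n : ℕ) :
    r ∈ v.asIdeal ^ n ↔ v.intValuationDef r ≤ Multiplicative.ofAdd (-(n : ℤ)) := by
  exact (v.intValuation_le_pow_iff_mem r n).symm

lemma aux_dvd_of_intValuation_le {a b : O} (hb : b ≠ 0)
    (h : ∀ v : HeightOneSpectrum O, v.intValuationDef a ≤ v.intValuationDef b) : b ∣ a := by
  classical
  rcases eq_or_ne a 0 with rfl | ha
  · exact dvd_zero b
  have hbspan : (Ideal.span {b} : Ideal O) ≠ 0 := by
    simpa [Ideal.span_singleton_eq_bot] using hb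
  have haspan : (Ideal.span {a} : Ideal O) ≠ 0 := by
    simpa [Ideal.span_singleton_eq_bot] using ha
  have : (Ideal.span {b} : Ideal O) ∣ Ideal.span {a} := by
    rw [UniqueFactorizationMonoid.dvd_iff_normalizedFactors_le_normalizedFactors hbspan haspan,
      Multiset.le_iff_count]
    intro P
    by_cases hP : P ∈ UniqueFactorizationMonoid.normalizedFactors (Ideal.span {b} : Ideal O)
    · have hPprime : Prime P := UniqueFactorizationMonoid.prime_of_normalized_factor P hP
      have hP0 : P ≠ ⊥ := hPprime.ne_zero
      have hPp : P.IsPrime := Ideal.isPrime_of_prime hPprime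
      have hv := h ⟨P, hPp, hP0⟩
      rw [intValuationDef_if_neg _ ha, intValuationDef_if_neg _ hb, WithZero.exp_le_exp,
        neg_le_neg_iff, Int.ofNat_le] at hv
      rwa [← count_associates_factors_eq hbspan hPp hP0,
        ← count_associates_factors_eq haspan hPp hP0]
    · simp [Multiset.count_eq_zero_of_notMem hP]
  exact Ideal.mem_span_singleton.mp (Ideal.dvd_iff_le.mp this
    (Ideal.mem_span_singleton.mpr dvd_rfl))

/-- `v(b) = ofAdd (-k)` for some `k : ℕ` when `b ≠ 0`. -/
lemma aux_exists_val (v : HeightOneSpectrum O) {b : O} (hb : b ≠ 0) :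
    ∃ k : ℕ, v.intValuationDef b = Multiplicative.ofAdd (-(k : ℤ)) :=
  ⟨_, v.intValuationDef_if_neg hb⟩

/-- torsion-freeness of the adic completion of `O` at a height-one prime. -/
lemma aux_torsionfree (v : HeightOneSpectrum O) {c : O} (hc : c ≠ 0)
    {x : AdicCompletion v.asIdeal O} (hx : c • x = 0) : x = 0 := by
  apply AdicCompletion.ext
  intro n
  rw [AdicCompletion.val_zero]
  obtain ⟨k, hk⟩ := aux_exists_val v hc
  obtain ⟨y, hy⟩ := Submodule.Quotient.mk_surjective _ (x.val (n + k))
  -- c * y ∈ v.asIdeal ^ (n + k)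
  have h1 : c • x.val (n + k) = 0 := by
    rw [← AdicCompletion.val_smul_apply, hx, AdicCompletion.val_zero_apply]
  have h2 : c * y ∈ v.asIdeal ^ (n + k) := by
    rw [← aux_smul_top_eq v.asIdeal (n + k), ← Submodule.Quotient.mk_eq_zero, ← smul_eq_mul,
      Submodule.Quotient.mk_smul, hy, h1]
  -- deduce y ∈ v.asIdeal ^ n
  have h3 : y ∈ v.asIdeal ^ n := by
    rcases eq_or_ne y 0 with rfl | hy0
    · exact zero_mem _
    rw [aux_mem_pow_iff] at h2 ⊢
    rw [intValuation.map_mul', hk] at h2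
    obtain ⟨m, hm⟩ := aux_exists_val v hy0
    rw [hm] at h2 ⊢
    rw [← WithZero.coe_mul, WithZero.coe_le_coe, ← ofAdd_add, Multiplicative.ofAdd_le] at h2
    rw [WithZero.coe_le_coe, Multiplicative.ofAdd_le]
    omega
  -- conclude
  have : x.val n = AdicCompletion.transitionMap v.asIdeal O (Nat.le_add_right n k) (x.val (n + k)) :=
    (x.property _).symm
  rw [this, ← hy]
  change Submodule.Quotient.mk (p := (v.asIdeal ^ n • ⊤ : Submodule O O)) y = 0
  rw [Submodule.Quotient.mk_eq_zero,
    aux_smul_top_eq]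
  exact h3

end Aux

section Aux2

variable {O : Type*} [CommRing O] [IsDomain O] [IsDedekindDomain O]

lemma aux_quot_one (I : Ideal O) (n : ℕ) :
    (1 : O ⧸ (I ^ n • ⊤ : Submodule O O)) = Submodule.Quotient.mk 1 := rfl

lemma aux_of_eq_smul_one (I : Ideal O) (c : O) :
    AdicCompletion.of I O c = c • (1 : AdicCompletion I O) := by
  apply AdicCompletion.ext
  intro n
  rw [AdicCompletion.val_smul_apply, AdicCompletion.val_one, aux_quot_one, ← Submodule.Quotient.mk_smul,
    AdicCompletion.of_apply, Submodule.mkQ_apply]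
  congr 1
  simp [smul_eq_mul]

/-- From `A • 1 = B • x` in the completion at `v`, with `B ≠ 0`, deduce `v(A) ≤ v(B)`. -/
lemma aux_val_le (v : HeightOneSpectrum O) {A B : O} (hB : B ≠ 0)
    {x : AdicCompletion v.asIdeal O}
    (h : A • (1 : AdicCompletion v.asIdeal O) = B • x) :
    v.intValuationDef A ≤ v.intValuationDef B := by
  obtain ⟨k, hk⟩ := aux_exists_val v hB
  obtain ⟨y, hy⟩ := Submodule.Quotient.mk_surjective _ (x.val k)
  have h1 : A • (1 : AdicCompletion v.asIdeal O).val k = B • x.val k := by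
    rw [← AdicCompletion.val_smul_apply, ← AdicCompletion.val_smul_apply, h]
  rw [AdicCompletion.val_one, aux_quot_one, ← hy, ← Submodule.Quotient.mk_smul,
    ← Submodule.Quotient.mk_smul] at h1
  simp only [smul_eq_mul, mul_one] at h1
  have h2 : A - B * y ∈ v.asIdeal ^ k := by
    rw [← aux_smul_top_eq v.asIdeal k, ← Submodule.Quotient.mk_eq_zero,
      Submodule.Quotient.mk_sub, h1, sub_self]
  have h3 : v.intValuationDef (A - B * y) ≤ Multiplicative.ofAdd (-(k : ℤ)) :=
    (aux_mem_pow_iff v _ k).mp h2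
  have h4 : v.intValuationDef (B * y) ≤ v.intValuationDef B := by
    rw [intValuation.map_mul']
    exact mul_le_of_le_one_right' (v.intValuation_le_one y)
  have h5 : A = B * y + (A - B * y) := by ring
  have h6 := intValuation.map_add_le_max' v (B * y) (A - B * y)
  rw [← h5] at h6
  exact le_trans h6 (max_le h4 (le_trans h3 (le_of_eq hk.symm)))

end Aux2

set_option maxHeartbeats 1000000 in
/-- The arithmetic fracture square (equation (6.2) of the paper): for a Dedekind domain `𝒪`
which is not a field, with fraction field `K`, the sequence
`0 → 𝒪 → K ⊕ ∏_𝔭 𝒪ᵖ^ → K ⊗_𝒪 ∏_𝔭 𝒪ᵖ^` is exact, where the product runs over all nonzero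
prime ideals of `𝒪`; equivalently, the evident commutative square with corners `𝒪`,
`∏_𝔭 𝒪ᵖ^`, `K`, and `K ⊗_𝒪 ∏_𝔭 𝒪ᵖ^` is a pullback. -/
theorem arithmetic_fracture_square (O : Type*) [CommRing O] [IsDomain O] [IsDedekindDomain O]
    (hO : ¬ IsField O) :
    Function.Injective (fractureFirstMap O) ∧
      Function.Exact (fractureFirstMap O) (fractureSecondMap O) := by
  classical
  have hinj : Function.Injective (fractureFirstMap O) := by
    intro r s h
    exact IsFractionRing.injective O (FractionRing O)
      (congrArg Prod.fst h : algebraMap O (FractionRing O) r = algebraMap O (FractionRing O) s)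
  refine ⟨hinj, ?_⟩
  haveI : IsLocalizedModule (nonZeroDivisors O)
      (TensorProduct.mk O (FractionRing O) (ProdAdicCompletions' O) 1) :=
    (isLocalizedModule_iff_isBaseChange (nonZeroDivisors O) (FractionRing O) _).mpr
      (TensorProduct.isBaseChange O (ProdAdicCompletions' O) (FractionRing O))
  rintro ⟨q, x⟩
  constructor
  · intro hz
    have hz' : q ⊗ₜ[O] (1 : ProdAdicCompletions' O) - (1 : FractionRing O) ⊗ₜ[O] x = 0 := by
      simpa only [fractureSecondMap, LinearMap.sub_apply, LinearMap.comp_apply,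
        LinearMap.fst_apply, LinearMap.snd_apply, LinearMap.flip_apply,
        TensorProduct.mk_apply] using hz
    have h1x : (1 : FractionRing O) ⊗ₜ[O] x = q ⊗ₜ[O] (1 : ProdAdicCompletions' O) :=
      (sub_eq_zero.mp hz').symm
    obtain ⟨⟨a, b⟩, hab⟩ := IsLocalization.surj (nonZeroDivisors O) q
    have e1 : a • (1 : FractionRing O) = (b : O) • q := by
      rw [Algebra.smul_def, Algebra.smul_def, mul_one, mul_comm, hab]
    have key : TensorProduct.mk O (FractionRing O) (ProdAdicCompletions' O) 1
        ((a • (1 : ProdAdicCompletions' O)) - ((b : O) • x)) = 0 := by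
      rw [map_sub]
      simp only [TensorProduct.mk_apply]
      rw [TensorProduct.tmul_smul, TensorProduct.tmul_smul, h1x, TensorProduct.smul_tmul',
        TensorProduct.smul_tmul', e1, sub_self]
    obtain ⟨s, hs⟩ := (IsLocalizedModule.eq_zero_iff (nonZeroDivisors O)
      (TensorProduct.mk O (FractionRing O) (ProdAdicCompletions' O) 1)).mp key
    rw [Submonoid.smul_def, smul_sub, sub_eq_zero, smul_smul, smul_smul] at hs
    set A := (s : O) * a with hA
    set B := (s : O) * b with hB
    have hBne : B ≠ 0 := mul_ne_zero (nonZeroDivisors.ne_zero s.2) (nonZeroDivisors.ne_zero b.2)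
    -- componentwise equalities
    have hcomp : ∀ 𝔭 : {𝔭 : Ideal O // 𝔭 ≠ ⊥ ∧ 𝔭.IsPrime},
        A • (1 : AdicCompletion 𝔭.1 O) = B • x 𝔭 := fun 𝔭 => congrFun hs 𝔭
    -- q is integral
    have hdvd : B ∣ A := by
      apply aux_dvd_of_intValuation_le hBne
      intro v
      exact aux_val_le v hBne (hcomp ⟨v.asIdeal, v.ne_bot, v.isPrime⟩)
    obtain ⟨c, hc⟩ := hdvd
    refine ⟨c, ?_⟩
    have hq : q = algebraMap O (FractionRing O) c := by
      have hBK : algebraMap O (FractionRing O) B ≠ 0 :=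
        fun h => hBne (IsFractionRing.injective O (FractionRing O) (by rw [h, map_zero]))
      apply mul_left_cancel₀ hBK
      rw [← map_mul, ← hc, hA, hB, map_mul, map_mul, mul_assoc, mul_comm _ q, hab]
    have hx : ∀ 𝔭 : {𝔭 : Ideal O // 𝔭 ≠ ⊥ ∧ 𝔭.IsPrime}, x 𝔭 = AdicCompletion.of 𝔭.1 O c := by
      intro 𝔭
      have hv := hcomp 𝔭
      have : B • (x 𝔭 - c • (1 : AdicCompletion 𝔭.1 O)) = 0 := by
        rw [smul_sub, smul_smul, ← hc, ← hv, sub_self]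
      have h0 := aux_torsionfree ⟨𝔭.1, 𝔭.2.2, 𝔭.2.1⟩ hBne this
      rw [aux_of_eq_smul_one, ← sub_eq_zero]
      exact h0
    refine Prod.ext hq.symm (funext fun 𝔭 => (hx 𝔭).symm)
  · rintro ⟨r, hr⟩
    rw [← hr]
    have e2 : (fun 𝔭 : {𝔭 : Ideal O // 𝔭 ≠ ⊥ ∧ 𝔭.IsPrime} => AdicCompletion.of 𝔭.1 O r) =
        r • (1 : ProdAdicCompletions' O) := funext fun 𝔭 => aux_of_eq_smul_one 𝔭.1 r
    have e2' : (LinearMap.pi fun 𝔭 : {𝔭 : Ideal O // 𝔭 ≠ ⊥ ∧ 𝔭.IsPrime} =>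
        AdicCompletion.of 𝔭.1 O) r = r • (1 : ProdAdicCompletions' O) :=
      funext fun 𝔭 => aux_of_eq_smul_one 𝔭.1 r
    simp only [fractureSecondMap, fractureFirstMap, LinearMap.sub_apply, LinearMap.comp_apply,
      LinearMap.fst_apply, LinearMap.snd_apply, LinearMap.flip_apply, TensorProduct.mk_apply,
      LinearMap.prod_apply, Function.prod, Algebra.linearMap_apply]
    rw [sub_eq_zero, e2', TensorProduct.tmul_smul, TensorProduct.smul_tmul',
      Algebra.algebraMap_eq_smul_one]
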